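/- Let α ≥ 1 be a countable ordinal. Every update procedure U of ordinal α has a finite zero: there exists a sequence f = (f_β)_{β<α} of functions ℕ → ℕ such that {(γ,n) : f_γ n ≠ 0} is finite and U f = ∅ (Zero Theorem for transfinite update procedures). -/

import Mathlib

/-- Transfinite sequences of functions are modeled as functions on all ordinals;
an update procedure of ordinal `α` only depends on (and only updates) the
entries with index below `α`. -/
abbrev OSeq := Ordinal → ℕ → ℕ

/-- `U` is an update procedure of ordinal `α`:
it is continuous (it depends only on finitely many values of its input, all of
index below `α`), it only outputs updates with index below `α`, and it satisfies
the update condition. -/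
def IsUpdateProc (α : Ordinal) (U : OSeq → Option (Ordinal × ℕ × ℕ)) : Prop :=
  (∀ f : OSeq, ∃ A : Finset (Ordinal × ℕ), (∀ p ∈ A, p.1 < α) ∧
      ∀ g : OSeq, (∀ p ∈ A, g p.1 p.2 = f p.1 p.2) → U g = U f) ∧
  (∀ (f : OSeq) (β : Ordinal) (n m : ℕ), U f = some (β, n, m) → β < α) ∧
  (∀ (f g : OSeq) (β : Ordinal) (n m i j : ℕ),
      (∀ γ, γ < β → f γ = g γ) →
      U f = some (β, n, m) → g β n = m → U g = some (β, i, j) → i ≠ n)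

/-- A sequence is finite (below `α`) if it has nonzero values in only
finitely many places. -/
def OFinite (α : Ordinal) (f : OSeq) : Prop :=
  Set.Finite {p : Ordinal × ℕ | p.1 < α ∧ f p.1 p.2 ≠ 0}

namespace ZeroThmAux

noncomputable section

/-- reset-update: set entry `n` at level `β` to `m`, zero out everything above `β`. -/
def ru (f : OSeq) (β : Ordinal) (n m : ℕ) : OSeq := fun γ k =>
  if γ < β then f γ k else if γ = β then (if k = n then m else f γ k) else 0

theorem ru_lo {f : OSeq} {β γ : Ordinal} {n m : ℕ} (h : γ < β) : ru f β n m γ = f γ := by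
  funext k; simp [ru, h]

theorem ru_hi {f : OSeq} {β γ : Ordinal} {n m : ℕ} (h : β < γ) {k : ℕ} : ru f β n m γ k = 0 := by
  simp [ru, lt_asymm h, h.ne']

theorem ru_at {f : OSeq} {β : Ordinal} {n m k : ℕ} :
    ru f β n m β k = if k = n then m else f β k := by
  simp [ru]

theorem ru_high_eq {x y : OSeq} {d β : Ordinal} (h : ∀ γ, d ≤ γ → x γ = y γ) (hβ : d ≤ β)
    (n m : ℕ) : ∀ γ, d ≤ γ → ru x β n m γ = ru y β n m γ := by
  intro γ hγ
  funext k
  by_cases h1 : γ < β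
  · simp only [ru, if_pos h1]; rw [h γ hγ]
  · by_cases h2 : γ = β
    · simp only [ru, if_neg h1, if_pos h2]; rw [h γ hγ]
    · simp only [ru, if_neg h1, if_neg h2]

/-- a (deterministic, reset-) run of `U`, with all update levels `≥ c`. -/
structure RunOf (U : OSeq → Option (Ordinal × ℕ × ℕ)) (c : Ordinal) (s : ℕ → OSeq)
    (o : ℕ → Ordinal × ℕ × ℕ) : Prop where
  out : ∀ j, U (s j) = some (o j)
  lb : ∀ j, c ≤ (o j).1
  step : ∀ j, s (j + 1) = ru (s j) (o j).1 (o j).2.1 (o j).2.2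

/-- the deterministic run of `U` started at `G`. -/
def drun (U : OSeq → Option (Ordinal × ℕ × ℕ)) (G : OSeq) : ℕ → OSeq
  | 0 => G
  | l + 1 =>
    match U (drun U G l) with
    | some x => ru (drun U G l) x.1 x.2.1 x.2.2
    | none => drun U G l

theorem drun_succ_some {U : OSeq → Option (Ordinal × ℕ × ℕ)} {G : OSeq} {l : ℕ}
    {x : Ordinal × ℕ × ℕ} (h : U (drun U G l) = some x) :
    drun U G (l + 1) = ru (drun U G l) x.1 x.2.1 x.2.2 := by
  simp only [drun]; rw [h]

theorem RunOf.drun_eq {U : OSeq → Option (Ordinal × ℕ × ℕ)} {c : Ordinal} {s : ℕ → OSeq}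
    {o : ℕ → Ordinal × ℕ × ℕ} (hr : RunOf U c s o) (j : ℕ) :
    ∀ r, drun U (s j) r = s (j + r)
  | 0 => rfl
  | r + 1 => by
    have ih := hr.drun_eq j r
    have h : U (drun U (s j) r) = some (o (j + r)) := by rw [ih]; exact hr.out (j + r)
    rw [drun_succ_some h, ih, show j + (r + 1) = (j + r) + 1 from rfl, hr.step (j + r)]

def Vanish (c : Ordinal) (F : OSeq) : Prop := ∀ γ, c ≤ γ → ∀ k, F γ k = 0

def Good (U : OSeq → Option (Ordinal × ℕ × ℕ)) (α c : Ordinal) (F : OSeq) : Prop :=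
  c ≤ α ∧ Vanish c F ∧ ∃ s o, s 0 = F ∧ RunOf U c s o

theorem good_of_alive {U : OSeq → Option (Ordinal × ℕ × ℕ)} {α c : Ordinal} (hcα : c ≤ α)
    {G : OSeq} (hv : Vanish c G)
    (h : ∀ l, ∃ x : Ordinal × ℕ × ℕ, U (drun U G l) = some x ∧ c ≤ x.1) :
    Good U α c G :=
  ⟨hcα, hv, drun U G, fun l => Classical.choose (h l), rfl,
   { out := fun j => (Classical.choose_spec (h j)).1,
     lb := fun j => (Classical.choose_spec (h j)).2,
     step := fun j => drun_succ_some (Classical.choose_spec (h j)).1 }⟩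

theorem run_frozen {U : OSeq → Option (Ordinal × ℕ × ℕ)} {c : Ordinal} {s : ℕ → OSeq}
    {o : ℕ → Ordinal × ℕ × ℕ} (hr : RunOf U c s o) {γ : Ordinal} {K : ℕ}
    (h : ∀ j, K ≤ j → γ < (o j).1) : ∀ j, K ≤ j → s j γ = s K γ := by
  intro j hj
  induction j, hj using Nat.le_induction with
  | base => rfl
  | succ j hj ih => rw [hr.step j, ru_lo (h j hj), ih]

theorem entry_frozen {U : OSeq → Option (Ordinal × ℕ × ℕ)} {c : Ordinal} {s : ℕ → OSeq}
    {o : ℕ → Ordinal × ℕ × ℕ} (hr : RunOf U c s o) {b : Ordinal} {n : ℕ} {p : ℕ} :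
    ∀ q, p ≤ q → (∀ j, p ≤ j → j < q → b ≤ (o j).1 ∧ ((o j).1 = b → (o j).2.1 ≠ n)) →
      s q b n = s p b n := by
  intro q hq
  induction q, hq using Nat.le_induction with
  | base => intro _; rfl
  | succ q hq ih =>
    intro h
    have hj := h q hq (Nat.lt_succ_self q)
    have hrest : s q b n = s p b n := ih (fun j a hb => h j a (hb.trans (Nat.lt_succ_self q)))
    rw [hr.step q]
    rcases lt_or_eq_of_le hj.1 with hlt | heq
    · rw [ru_lo hlt, hrest]
    · have hne : (o q).2.1 ≠ n := hj.2 heq.symm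
      rw [← heq, ru_at, if_neg (fun hh : n = (o q).2.1 => hne hh.symm)]; exact hrest

end
end ZeroThmAux

namespace ZeroThmAux
noncomputable section

theorem ord_add_one_le_iff {a b : Ordinal} : a + 1 ≤ b ↔ a < b := by
  rw [Ordinal.add_one_eq_succ]; exact Order.succ_le_iff

theorem ord_lt_add_one_iff {a b : Ordinal} : a < b + 1 ↔ a ≤ b := by
  rw [Ordinal.add_one_eq_succ]; exact Order.lt_succ_iff

/-- Freezing: once an update `(b, n, m)` has been issued at a stage `p ≥ K` (where from `K`
on all updates have level `≥ b`), the entry `(b, n)` keeps value `m` forever after, and no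
later level-`b` update ever uses index `n` again. -/
theorem freeze {α : Ordinal} {U : OSeq → Option (Ordinal × ℕ × ℕ)} {c : Ordinal} {s : ℕ → OSeq}
    {o : ℕ → Ordinal × ℕ × ℕ} (hr : RunOf U c s o) (hUp : IsUpdateProc α U) {b : Ordinal}
    {K : ℕ} (hK : ∀ j, K ≤ j → b ≤ (o j).1) {p : ℕ} (hp : K ≤ p) (hpb : (o p).1 = b) :
    ∀ q, p < q → s q b (o p).2.1 = (o p).2.2 ∧ ((o q).1 = b → (o q).2.1 ≠ (o p).2.1) := by
  have low : ∀ γ, γ < b → ∀ j, K ≤ j → s j γ = s K γ := fun γ hγ =>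
    run_frozen hr (fun j hj => lt_of_lt_of_le hγ (hK j hj))
  have idx : ∀ q, p < q → s q b (o p).2.1 = (o p).2.2 → (o q).1 = b → (o q).2.1 ≠ (o p).2.1 := by
    intro q hq hv hqb
    have hagree : ∀ γ, γ < b → s p γ = s q γ := fun γ hγ => by
      rw [low γ hγ p hp, low γ hγ q (hp.trans hq.le)]
    have hop : o p = (b, (o p).2.1, (o p).2.2) := by rw [← hpb]
    have hoq : o q = (b, (o q).2.1, (o q).2.2) := by rw [← hqb]
    have h1 : U (s p) = some (b, (o p).2.1, (o p).2.2) := by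
      have h := hr.out p; rw [hop] at h; exact h
    have h2 : U (s q) = some (b, (o q).2.1, (o q).2.2) := by
      have h := hr.out q; rw [hoq] at h; exact h
    exact hUp.2.2 (s p) (s q) b (o p).2.1 (o p).2.2 (o q).2.1 (o q).2.2 hagree h1 hv h2
  have val : ∀ q, p + 1 ≤ q → s q b (o p).2.1 = (o p).2.2 := by
    intro q hq
    induction q, hq using Nat.le_induction with
    | base =>
      rw [hr.step p, hpb, ru_at, if_pos rfl]
    | succ q hq ih =>
      have hKq : K ≤ q := hp.trans (Nat.le_of_succ_le hq)
      have hne := idx q hq ih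
      rw [hr.step q]
      rcases lt_or_eq_of_le (hK q hKq) with hlt | heq
      · rw [ru_lo hlt]; exact ih
      · rw [← heq, ru_at, if_neg (fun hh : (o p).2.1 = (o q).2.1 => (hne heq.symm) hh.symm)]
        exact ih
  exact fun q hq => ⟨val q hq, idx q hq (val q hq)⟩

/-- The core approximation lemma: if all the starts `q i` converge to `G` (exactly at levels
`≥ d`, pointwise at levels `< d`), each `q i` generates an infinite run, and any output
that is issued from stage `l` of all late runs has level `≥ d`, then `G` generates an
infinite run with all levels `≥ d`. -/
theorem approx {U : OSeq → Option (Ordinal × ℕ × ℕ)} {α : Ordinal} (hUp : IsUpdateProc α U)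
    (d : Ordinal) (G : OSeq) (q : ℕ → OSeq)
    (halive : ∀ i r, ∃ x : Ordinal × ℕ × ℕ, U (drun U (q i) r) = some x)
    (hhigh : ∀ i, ∀ γ, d ≤ γ → q i γ = G γ)
    (hlow : ∀ γ, γ < d → ∀ k, ∃ i₀, ∀ i, i₀ ≤ i → q i γ k = G γ k)
    (hlev : ∀ (l : ℕ) (x : Ordinal × ℕ × ℕ) (I : ℕ),
      (∀ i, I ≤ i → U (drun U (q i) l) = some x) → d ≤ x.1) :
    ∀ l, ∃ x : Ordinal × ℕ × ℕ, U (drun U G l) = some x ∧ d ≤ x.1 := by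
  suffices h : ∀ l, (∃ I, ∀ i, I ≤ i → ∀ r, r < l → U (drun U (q i) r) = U (drun U G r)) ∧
      (∀ r, r < l → ∃ x : Ordinal × ℕ × ℕ, U (drun U G r) = some x ∧ d ≤ x.1) by
    intro l; exact (h (l + 1)).2 l (Nat.lt_succ_self l)
  intro l
  induction l with
  | zero => exact ⟨⟨0, fun i _ r hr => absurd hr (Nat.not_lt_zero r)⟩,
      fun r hr => absurd hr (Nat.not_lt_zero r)⟩
  | succ l ih =>
    obtain ⟨⟨I0, hI0⟩, hout⟩ := ih
    -- states in the window agree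
    have window : ∀ i, I0 ≤ i → ∀ r, r ≤ l →
        (∀ γ, d ≤ γ → drun U (q i) r γ = drun U G r γ) ∧
        (∀ γ, γ < d → drun U (q i) r γ = q i γ ∧ drun U G r γ = G γ) := by
      intro i hi r
      induction r with
      | zero => exact fun _ => ⟨fun γ hγ => hhigh i γ hγ, fun γ _ => ⟨rfl, rfl⟩⟩
      | succ r ihr =>
        intro hr
        have hrlt : r < l := hr
        obtain ⟨x, hx, hxd⟩ := hout r hrlt
        have hqx : U (drun U (q i) r) = some x := by rw [hI0 i hi r hrlt]; exact hx
        have ihr' := ihr (Nat.le_of_succ_le hr)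
        constructor
        · intro γ hγ
          rw [drun_succ_some hqx, drun_succ_some hx]
          exact ru_high_eq ihr'.1 hxd _ _ γ hγ
        · intro γ hγ
          have hγx : γ < x.1 := lt_of_lt_of_le hγ hxd
          rw [drun_succ_some hqx, drun_succ_some hx, ru_lo hγx, ru_lo hγx]
          exact ihr'.2 γ hγ
    -- continuity at step l
    obtain ⟨A, _, hA2⟩ := hUp.1 (drun U G l)
    classical
    set φ : Ordinal × ℕ → ℕ :=
      fun p => if h : p.1 < d then Classical.choose (hlow p.1 h p.2) else 0 with hφ
    set I1 : ℕ := max I0 (A.sup φ) with hI1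
    have key : ∀ i, I1 ≤ i → U (drun U (q i) l) = U (drun U G l) := by
      intro i hi
      have hiI0 : I0 ≤ i := le_trans (le_max_left _ _) hi
      apply hA2
      intro p hp
      rcases lt_or_ge p.1 d with hpd | hpd
      · have h1 := ((window i hiI0 l le_rfl).2 p.1 hpd).1
        have h2 := ((window i hiI0 l le_rfl).2 p.1 hpd).2
        rw [h1, h2]
        have hspec := Classical.choose_spec (hlow p.1 hpd p.2)
        apply hspec
        have : φ p = Classical.choose (hlow p.1 hpd p.2) := by rw [hφ]; exact dif_pos hpd
        rw [← this]
        exact le_trans (le_trans (Finset.le_sup hp) (le_max_right I0 _)) hi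
      · rw [(window i hiI0 l le_rfl).1 p.1 hpd]
    obtain ⟨x, hx⟩ := halive I1 l
    have hGl : U (drun U G l) = some x := by rw [← key I1 le_rfl]; exact hx
    have hxd : d ≤ x.1 := hlev l x I1 (fun i hi => by rw [key i hi]; exact hGl)
    refine ⟨⟨I1, fun i hi r hr => ?_⟩, fun r hr => ?_⟩
    · rcases Nat.lt_succ_iff_lt_or_eq.mp hr with h | h
      · exact hI0 i (le_trans (le_max_left _ _) hi) r h
      · subst h; exact key i hi
    · rcases Nat.lt_succ_iff_lt_or_eq.mp hr with h | h
      · exact hout r h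
      · subst h; exact ⟨x, hGl, hxd⟩

end
end ZeroThmAux

namespace ZeroThmAux
noncomputable section

theorem ext_lemma {α : Ordinal} {U : OSeq → Option (Ordinal × ℕ × ℕ)} (hUp : IsUpdateProc α U)
    {c : Ordinal} {F : OSeq} (hg : Good U α c F) :
    ∃ c' F', c < c' ∧ Good U α c' F' ∧ ∀ γ, γ < c → ∀ k, F' γ k = F γ k := by
  classical
  obtain ⟨hcα, hvan, s, o, hs0, hr⟩ := hg
  have houtα : ∀ j, (o j).1 < α := by
    intro j
    exact hUp.2.1 (s j) (o j).1 (o j).2.1 (o j).2.2 (hr.out j)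
  set S : Set Ordinal := {γ | {j | (o j).1 ≤ γ}.Infinite} with hS
  have hαS : α ∈ S := by
    have he : {j | (o j).1 ≤ α} = Set.univ :=
      Set.eq_univ_of_forall (fun j => le_of_lt (houtα j))
    simp only [hS, Set.mem_setOf_eq, he]
    exact Set.infinite_univ
  have hSne : S.Nonempty := ⟨α, hαS⟩
  set b : Ordinal := (wellFounded_lt).min S hSne with hb
  have hbmem : {j | (o j).1 ≤ b}.Infinite := (wellFounded_lt).min_mem S hSne
  have hbmin : ∀ γ, γ < b → {j | (o j).1 ≤ γ}.Finite := by
    intro γ hγ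
    by_contra h
    exact (wellFounded_lt).not_lt_min S (h : γ ∈ S) hγ
  have hbα : b ≤ α := not_lt.mp ((wellFounded_lt).not_lt_min S hαS)
  have hcb : c ≤ b := by
    by_contra h
    obtain ⟨j, hj⟩ := hbmem.nonempty
    exact h (le_trans (hr.lb j) hj)
  by_cases hfin : {j | (o j).1 < b}.Finite
  · -- CASE (i): infinitely many updates exactly at level b; extraction at c' = b + 1
    obtain ⟨K0, hK0⟩ := hfin.bddAbove
    have hK : ∀ j, K0 + 1 ≤ j → b ≤ (o j).1 := by
      intro j hj
      by_contra h
      have := hK0 (show j ∈ {j | (o j).1 < b} from not_le.mp h)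
      omega
    set K := K0 + 1 with hKdef
    have hSb : {j | K ≤ j ∧ (o j).1 = b}.Infinite := by
      apply Set.Infinite.mono ?_ (hbmem.diff (hfin.union (Set.finite_Iio K)))
      intro j hj
      obtain ⟨h1, h2⟩ := hj
      simp only [Set.mem_union, Set.mem_setOf_eq, Set.mem_Iio, not_or] at h2
      exact ⟨not_lt.mp h2.2, le_antisymm h1 (not_lt.mp h2.1)⟩
    have hbα' : b < α := by
      obtain ⟨j, hj⟩ := hSb.nonempty
      exact hj.2 ▸ houtα j
    set P : ℕ → Prop := fun j => K ≤ j ∧ (o j).1 = b with hPdef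
    have hPinf : {j | P j}.Infinite := hSb
    set js : ℕ → ℕ := fun i => Nat.nth P i with hjs
    have hjs_mem : ∀ i, K ≤ js i ∧ (o (js i)).1 = b := fun i => Nat.nth_mem_of_infinite hPinf i
    have hjs_mono : StrictMono js := Nat.nth_strictMono hPinf
    set ps : ℕ → ℕ := fun i => js i + 1 with hps
    have hps_ge : ∀ i, i < ps i := fun i => Nat.lt_succ_of_le hjs_mono.le_apply
    have hps_K : ∀ i, K ≤ ps i := fun i => le_trans (hjs_mem i).1 (Nat.le_succ _)
    have conv : ∀ k : ℕ, ∃ J, ∀ j, J ≤ j → s j b k = s J b k := by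
      intro k
      by_cases hex : ∃ p, K ≤ p ∧ (o p).1 = b ∧ (o p).2.1 = k
      · obtain ⟨p, hp1, hp2, hp3⟩ := hex
        refine ⟨p + 1, fun j hj => ?_⟩
        have v1 : s j b k = (o p).2.2 := by
          rw [← hp3]
          exact (freeze hr hUp hK hp1 hp2 j (lt_of_lt_of_le (Nat.lt_succ_self p) hj)).1
        have v2 : s (p + 1) b k = (o p).2.2 := by
          rw [← hp3]
          exact (freeze hr hUp hK hp1 hp2 (p + 1) (Nat.lt_succ_self p)).1
        rw [v1, v2]
      · refine ⟨K, fun j hj => ?_⟩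
        exact entry_frozen hr j hj
          (fun j' h1 _ => ⟨hK j' h1, fun hb' hk => hex ⟨j', h1, hb', hk⟩⟩)
    set Jf : ℕ → ℕ := fun k => Classical.choose (conv k) with hJfdef
    have hJfs : ∀ k, ∀ j, Jf k ≤ j → s j b k = s (Jf k) b k := fun k =>
      Classical.choose_spec (conv k)
    set tinf : ℕ → ℕ := fun k => s (Jf k) b k with htinf
    set F' : OSeq := fun γ k => if γ < b then s K γ k else if γ = b then tinf k else 0 with hF'
    have frozen_lo : ∀ γ, γ < b → ∀ j, K ≤ j → s j γ = s K γ := fun γ hγ =>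
      run_frozen hr (fun j hj => lt_of_lt_of_le hγ (hK j hj))
    have halive : ∀ i r, ∃ x : Ordinal × ℕ × ℕ, U (drun U (s (ps i)) r) = some x := by
      intro i r
      rw [hr.drun_eq (ps i) r]
      exact ⟨o (ps i + r), hr.out _⟩
    have hhigh : ∀ i, ∀ γ, b + 1 ≤ γ → s (ps i) γ = F' γ := by
      intro i γ hγ
      have hbγ : b < γ := ord_add_one_le_iff.mp hγ
      funext k
      have h0 : s (ps i) γ k = 0 := by
        show s (js i + 1) γ k = 0
        rw [hr.step (js i), (hjs_mem i).2]
        exact ru_hi hbγ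
      rw [h0]
      simp only [hF']
      rw [if_neg (lt_asymm hbγ), if_neg (ne_of_gt hbγ)]
    have hlow : ∀ γ, γ < b + 1 → ∀ k, ∃ i₀, ∀ i, i₀ ≤ i → s (ps i) γ k = F' γ k := by
      intro γ hγ k
      rcases lt_or_eq_of_le (ord_lt_add_one_iff.mp hγ) with hlt | heq
      · refine ⟨0, fun i _ => ?_⟩
        rw [frozen_lo γ hlt (ps i) (hps_K i)]
        simp only [hF']
        rw [if_pos hlt]
      · subst heq
        refine ⟨Jf k, fun i hi => ?_⟩
        have hpsJ : Jf k ≤ ps i := le_trans hi (le_of_lt (hps_ge i))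
        rw [hJfs k (ps i) hpsJ]
        simp [hF', htinf]
    have hlev : ∀ (l : ℕ) (x : Ordinal × ℕ × ℕ) (I : ℕ),
        (∀ i, I ≤ i → U (drun U (s (ps i)) l) = some x) → b + 1 ≤ x.1 := by
      intro l x I h
      have hox : ∀ i, I ≤ i → o (ps i + l) = x := by
        intro i hi
        have h1 := h i hi
        rw [hr.drun_eq (ps i) l] at h1
        exact Option.some_injective _ ((hr.out (ps i + l)).symm.trans h1)
      have hxb : b ≤ x.1 := by
        rw [← hox I le_rfl]
        exact hK _ (le_trans (hps_K I) (Nat.le_add_right _ _))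
      rcases lt_or_eq_of_le hxb with hlt | heq
      · exact ord_add_one_le_iff.mpr hlt
      · exfalso
        have hq12 : ps I + l < ps (I + 1) + l := by
          have := hjs_mono (show I < I + 1 by omega)
          simp only [hps]
          omega
        have ho1 := hox I le_rfl
        have ho2 := hox (I + 1) (Nat.le_succ I)
        have hb1 : (o (ps I + l)).1 = b := by rw [ho1, ← heq]
        have hfr := (freeze hr hUp hK (le_trans (hps_K I) (Nat.le_add_right _ _)) hb1
          (ps (I + 1) + l) hq12).2
        exact hfr (by rw [ho2, ← heq]) (by rw [ho1, ho2])
    have happ := approx hUp (b + 1) F' (fun i => s (ps i)) halive hhigh hlow hlev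
    refine ⟨b + 1, F', ?_, good_of_alive (ord_add_one_le_iff.mpr hbα') ?_ happ, ?_⟩
    · exact lt_of_le_of_lt hcb (ord_lt_add_one_iff.mpr le_rfl)
    · intro γ hγ k
      have hbγ : b < γ := ord_add_one_le_iff.mp hγ
      simp only [hF']
      rw [if_neg (lt_asymm hbγ), if_neg (ne_of_gt hbγ)]
    · intro γ hγ k
      have hγb : γ < b := lt_of_lt_of_le hγ hcb
      have h00 : s K γ = s 0 γ :=
        run_frozen hr (fun j _ => lt_of_lt_of_le hγ (hr.lb j)) K (Nat.zero_le K)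
      simp only [hF']
      rw [if_pos hγb, h00, hs0]
  · -- CASE (ii): updates below b approach b cofinally; extraction at c' = b
    have hinf : {j | (o j).1 < b}.Infinite := hfin
    have hcbne : c ≠ b := by
      intro he
      apply hfin
      apply Set.Finite.subset Set.finite_empty
      intro j hj
      rw [← he] at hj
      exact absurd (hj : (o j).1 < c) (not_lt.mpr (hr.lb j))
    have hcb' : c < b := lt_of_le_of_ne hcb hcbne
    have hKg : ∀ γ, γ < b → ∃ Kg, ∀ j, Kg ≤ j → γ < (o j).1 := by
      intro γ hγ
      obtain ⟨Kg, hKg⟩ := (hbmin γ hγ).bddAbove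
      refine ⟨Kg + 1, fun j hj => ?_⟩
      by_contra h
      have := hKg (show j ∈ {j | (o j).1 ≤ γ} from not_lt.mp h)
      omega
    set Kf : Ordinal → ℕ := fun γ => if h : γ < b then (hKg γ h).choose else 0 with hKfdef
    have hKfs : ∀ γ, γ < b → ∀ j, Kf γ ≤ j → γ < (o j).1 := by
      intro γ hγ
      have he : Kf γ = (hKg γ hγ).choose := by simp only [hKfdef]; exact dif_pos hγ
      rw [he]
      exact (hKg γ hγ).choose_spec
    have frozen : ∀ γ, γ < b → ∀ j, Kf γ ≤ j → s j γ = s (Kf γ) γ := fun γ hγ =>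
      run_frozen hr (hKfs γ hγ)
    set F' : OSeq := fun γ k => if γ < b then s (Kf γ) γ k else 0 with hF'
    set P : ℕ → Prop := fun j => (o j).1 < b with hPdef
    have hPinf : {j | P j}.Infinite := hinf
    set js : ℕ → ℕ := fun i => Nat.nth P i with hjs
    have hjs_mem : ∀ i, (o (js i)).1 < b := fun i => Nat.nth_mem_of_infinite hPinf i
    have hjs_mono : StrictMono js := Nat.nth_strictMono hPinf
    set ps : ℕ → ℕ := fun i => js i + 1 with hps
    have hps_ge : ∀ i, i < ps i := fun i => Nat.lt_succ_of_le hjs_mono.le_apply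
    have halive : ∀ i r, ∃ x : Ordinal × ℕ × ℕ, U (drun U (s (ps i)) r) = some x := by
      intro i r
      rw [hr.drun_eq (ps i) r]
      exact ⟨o (ps i + r), hr.out _⟩
    have hhigh : ∀ i, ∀ γ, b ≤ γ → s (ps i) γ = F' γ := by
      intro i γ hγ
      funext k
      have h0 : s (ps i) γ k = 0 := by
        show s (js i + 1) γ k = 0
        rw [hr.step (js i)]
        exact ru_hi (lt_of_lt_of_le (hjs_mem i) hγ)
      rw [h0]
      simp only [hF']
      rw [if_neg (not_lt.mpr hγ)]
    have hlow : ∀ γ, γ < b → ∀ k, ∃ i₀, ∀ i, i₀ ≤ i → s (ps i) γ k = F' γ k := by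
      intro γ hγ k
      refine ⟨Kf γ, fun i hi => ?_⟩
      have hKγ : Kf γ ≤ ps i := le_trans hi (le_of_lt (hps_ge i))
      rw [frozen γ hγ (ps i) hKγ]
      simp only [hF']
      rw [if_pos hγ]
    have hlev : ∀ (l : ℕ) (x : Ordinal × ℕ × ℕ) (I : ℕ),
        (∀ i, I ≤ i → U (drun U (s (ps i)) l) = some x) → b ≤ x.1 := by
      intro l x I h
      have hox : ∀ i, I ≤ i → o (ps i + l) = x := by
        intro i hi
        have h1 := h i hi
        rw [hr.drun_eq (ps i) l] at h1
        exact Option.some_injective _ ((hr.out (ps i + l)).symm.trans h1)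
      by_contra hxb
      have hxb' : x.1 < b := not_le.mp hxb
      have hsub : (fun i => ps i + l) '' Set.Ici I ⊆ {j | (o j).1 ≤ x.1} := by
        rintro j ⟨i, hi, rfl⟩
        show (o (ps i + l)).1 ≤ x.1
        rw [hox i hi]
      have hinj : Set.InjOn (fun i => ps i + l) (Set.Ici I) := by
        intro a _ a' _ hab
        simp only [hps] at hab
        have : js a = js a' := by omega
        exact hjs_mono.injective this
      exact absurd (Set.Infinite.mono hsub ((Set.Ici_infinite I).image hinj))
        (Set.not_infinite.mpr (hbmin x.1 hxb'))
    have happ := approx hUp b F' (fun i => s (ps i)) halive hhigh hlow hlev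
    refine ⟨b, F', hcb', good_of_alive hbα ?_ happ, ?_⟩
    · intro γ hγ k
      simp only [hF']
      rw [if_neg (not_lt.mpr hγ)]
    · intro γ hγ k
      have hγb : γ < b := lt_trans hγ hcb'
      have h00 : s (Kf γ) γ = s 0 γ :=
        run_frozen hr (fun j _ => lt_of_lt_of_le hγ (hr.lb j)) (Kf γ) (Nat.zero_le _)
      simp only [hF']
      rw [if_pos hγb, h00, hs0]

end
end ZeroThmAux

namespace ZeroThmAux
noncomputable section

theorem lim_lemma {α : Ordinal} {U : OSeq → Option (Ordinal × ℕ × ℕ)} (hUp : IsUpdateProc α U)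
    (c : ℕ → Ordinal) (F : ℕ → OSeq) (hmono : Monotone c) (hgood : ∀ k, Good U α (c k) (F k))
    (hcoh : ∀ k k', k ≤ k' → ∀ γ, γ < c k → ∀ n, F k' γ n = F k γ n) :
    ∃ FLim, Good U α (⨆ k, c k) FLim ∧ ∀ k, ∀ γ, γ < c k → ∀ n, FLim γ n = F k γ n := by
  classical
  set cL := ⨆ k, c k with hcL
  have hbdd : BddAbove (Set.range c) := ⟨α, by rintro _ ⟨k, rfl⟩; exact (hgood k).1⟩
  have hlec : ∀ k, c k ≤ cL := fun k => le_ciSup hbdd k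
  have hcLα : cL ≤ α := ciSup_le fun k => (hgood k).1
  have hex : ∀ γ, γ < cL → ∃ k, γ < c k := by
    intro γ hγ
    by_contra h
    push_neg at h
    exact absurd (ciSup_le h) (not_le.mpr hγ)
  set FLim : OSeq := fun γ n => if h : γ < cL then F ((hex γ h).choose) γ n else 0 with hFLim
  have hFLimval : ∀ γ (h : γ < cL), ∀ k, γ < c k → ∀ n, FLim γ n = F k γ n := by
    intro γ h k hk n
    have hch : γ < c ((hex γ h).choose) := (hex γ h).choose_spec
    have he : FLim γ n = F ((hex γ h).choose) γ n := by
      simp only [hFLim]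
      exact dif_pos h
    rw [he]
    rcases le_total ((hex γ h).choose) k with hkk | hkk
    · exact (hcoh _ k hkk γ hch n).symm
    · exact hcoh k _ hkk γ hk n
  -- runs
  have hruns := fun k => (hgood k).2.2
  choose sk ok hk0 hkr using hruns
  have hdr : ∀ k r, drun U (F k) r = sk k r := by
    intro k r
    have := (hkr k).drun_eq 0 r
    rw [hk0 k] at this
    simpa using this
  have halive : ∀ k r, ∃ x : Ordinal × ℕ × ℕ, U (drun U (F k) r) = some x := by
    intro k r
    rw [hdr k r]
    exact ⟨ok k r, (hkr k).out r⟩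
  have hhigh : ∀ k, ∀ γ, cL ≤ γ → F k γ = FLim γ := by
    intro k γ hγ
    funext n
    have h1 : F k γ n = 0 := (hgood k).2.1 γ (le_trans (hlec k) hγ) n
    rw [h1]
    simp only [hFLim]
    rw [dif_neg (not_lt.mpr hγ)]
  have hlow : ∀ γ, γ < cL → ∀ n, ∃ k₀, ∀ k, k₀ ≤ k → F k γ n = FLim γ n := by
    intro γ hγ n
    refine ⟨(hex γ hγ).choose, fun k hk => ?_⟩
    have hγk : γ < c k := lt_of_lt_of_le (hex γ hγ).choose_spec (hmono hk)
    exact (hFLimval γ hγ k hγk n).symm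
  have hlev : ∀ (l : ℕ) (x : Ordinal × ℕ × ℕ) (I : ℕ),
      (∀ k, I ≤ k → U (drun U (F k) l) = some x) → cL ≤ x.1 := by
    intro l x I h
    apply ciSup_le
    intro k
    rcases le_total I k with hk | hk
    · have h1 := h k hk
      rw [hdr k l] at h1
      have : ok k l = x := Option.some_injective _ (((hkr k).out l).symm.trans h1)
      rw [← this]
      exact (hkr k).lb l
    · have h1 := h I le_rfl
      rw [hdr I l] at h1
      have hoI : ok I l = x := Option.some_injective _ (((hkr I).out l).symm.trans h1)
      calc c k ≤ c I := hmono hk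
        _ ≤ (ok I l).1 := (hkr I).lb l
        _ = x.1 := by rw [hoI]
  have happ := approx hUp cL FLim F halive hhigh hlow hlev
  refine ⟨FLim, good_of_alive hcLα ?_ happ, ?_⟩
  · intro γ hγ n
    simp only [hFLim]
    rw [dif_neg (not_lt.mpr hγ)]
  · intro k γ hγ n
    exact hFLimval γ (lt_of_lt_of_le hγ (hlec k)) k hγ n

end
end ZeroThmAux

namespace ZeroThmAux
noncomputable section

theorem ofinite_ru {α : Ordinal} {f : OSeq} (hf : OFinite α f) (β : Ordinal) (n m : ℕ) :
    OFinite α (ru f β n m) := by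
  apply Set.Finite.subset (hf.insert (β, n))
  rintro ⟨γ, k⟩ ⟨hγα, hne⟩
  by_cases h1 : γ < β
  · exact Set.mem_insert_iff.mpr (Or.inr ⟨hγα, by rwa [ru_lo h1] at hne⟩)
  · by_cases h2 : γ = β
    · subst h2
      by_cases h3 : k = n
      · subst h3; exact Set.mem_insert _ _
      · refine Set.mem_insert_iff.mpr (Or.inr ⟨hγα, ?_⟩)
        rwa [ru_at, if_neg h3] at hne
    · exfalso
      apply hne
      exact ru_hi (lt_of_le_of_ne (not_lt.mp h1) (Ne.symm h2))

theorem base_good {α : Ordinal} {U : OSeq → Option (Ordinal × ℕ × ℕ)}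
    (hnz : ∀ f, OFinite α f → U f ≠ none) : Good U α 0 (fun _ _ => 0) := by
  have hfin : ∀ l, OFinite α (drun U (fun _ _ => 0) l) := by
    intro l
    induction l with
    | zero =>
      apply Set.Finite.subset Set.finite_empty
      intro p hp
      exact absurd rfl hp.2
    | succ l ih =>
      cases hx : U (drun U (fun _ _ => 0) l) with
      | none =>
        rw [show drun U (fun _ _ => 0) (l + 1) = drun U (fun _ _ => 0) l from by
          simp only [drun]; rw [hx]]
        exact ih
      | some x => rw [drun_succ_some hx]; exact ofinite_ru ih x.1 x.2.1 x.2.2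
  apply good_of_alive (zero_le (a := α)) (fun _ _ _ => rfl)
  intro l
  cases hx : U (drun U (fun _ _ => 0) l) with
  | none => exact absurd hx (hnz _ (hfin l))
  | some x => exact ⟨x, rfl, zero_le (a := _)⟩

theorem no_zero_false {α : Ordinal} {U : OSeq → Option (Ordinal × ℕ × ℕ)}
    (hUp : IsUpdateProc α U) (hcount : α.card ≤ Cardinal.aleph0)
    (hnz : ∀ f, OFinite α f → U f ≠ none) : False := by
  classical
  have base := base_good hnz
  let T := {x : Ordinal × OSeq // Good U α x.1 x.2}
  let r : T → T → Prop := fun x y =>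
    x.val.1 ≤ y.val.1 ∧ ∀ γ, γ < x.val.1 → ∀ n, y.val.2 γ n = x.val.2 γ n
  have hrefl : ∀ x : T, r x x := fun x => ⟨le_rfl, fun _ _ _ => rfl⟩
  have htrans : ∀ {a b c : T}, r a b → r b c → r a c := by
    intro a b c h1 h2
    exact ⟨h1.1.trans h2.1, fun γ hγ n => by
      rw [h2.2 γ (lt_of_lt_of_le hγ h1.1) n, h1.2 γ hγ n]⟩
  have hchain : ∀ C : Set T, IsChain r C → ∃ ub, ∀ a ∈ C, r a ub := by
    intro C hC
    rcases C.eq_empty_or_nonempty with rfl | hCne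
    · exact ⟨⟨(0, fun _ _ => 0), base⟩, fun a ha => absurd ha (Set.notMem_empty a)⟩
    set A : Set Ordinal := (fun x : T => x.val.1) '' C with hA
    have hAne : A.Nonempty := hCne.image _
    have hAbdd : BddAbove A := ⟨α, by rintro _ ⟨x, _, rfl⟩; exact x.2.1⟩
    set oL := sSup A with hoL
    have hoLα : oL ≤ α := csSup_le hAne (by rintro a ⟨x, _, rfl⟩; exact x.2.1)
    by_cases hmem : oL ∈ A
    · obtain ⟨x, hxC, hx⟩ := hmem
      refine ⟨x, fun y hy => ?_⟩
      by_cases hxy : y = x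
      · subst hxy; exact hrefl y
      · rcases hC hy hxC hxy with h | h
        · exact h
        · have h1 : y.val.1 ≤ oL := le_csSup hAbdd ⟨y, hy, rfl⟩
          have h2 : y.val.1 = x.val.1 := le_antisymm (le_trans h1 (le_of_eq hx.symm)) h.1
          exact ⟨le_of_eq h2, fun γ hγ n =>
            (h.2 γ (lt_of_lt_of_le hγ (le_of_eq h2)) n).symm⟩
    · -- the sup of the chain is not attained
      have hltA : ∀ a, a ∈ A → a < oL := fun a ha =>
        lt_of_le_of_ne (le_csSup hAbdd ha) (fun h => hmem (h ▸ ha))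
      have hAcnt : A.Countable := by
        have h1 : A ⊆ insert α (Set.Iio α) := by
          rintro a ⟨x, _, rfl⟩
          rcases lt_or_eq_of_le x.2.1 with h | h
          · exact Set.mem_insert_iff.mpr (Or.inr h)
          · show x.val.1 ∈ insert α (Set.Iio α)
            rw [h]; exact Set.mem_insert _ _
        have h2 : (Set.Iio α).Countable := by
          rw [← Set.countable_coe_iff, ← Cardinal.mk_le_aleph0_iff, Ordinal.mk_Iio_ordinal]
          calc Cardinal.lift α.card ≤ Cardinal.lift Cardinal.aleph0 :=
                Cardinal.lift_le.mpr hcount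
            _ = Cardinal.aleph0 := Cardinal.lift_aleph0
        exact Set.Countable.mono h1 (h2.insert α)
      obtain ⟨e, he⟩ := hAcnt.exists_eq_range hAne
      have heA : ∀ k, e k ∈ A := fun k => he ▸ Set.mem_range_self k
      let g : ℕ → Ordinal := fun k => Nat.rec (e 0) (fun k gk => max gk (e (k + 1))) k
      have hgs : ∀ k, g (k + 1) = max (g k) (e (k + 1)) := fun _ => rfl
      have hgA : ∀ k, g k ∈ A := by
        intro k
        induction k with
        | zero => exact heA 0
        | succ k ih =>
          rw [hgs]
          rcases le_total (g k) (e (k + 1)) with h | h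
          · rw [max_eq_right h]; exact heA _
          · rw [max_eq_left h]; exact ih
      have hge : ∀ k, e k ≤ g k := by
        intro k
        cases k with
        | zero => exact le_rfl
        | succ k => rw [hgs]; exact le_max_right _ _
      have hgmono : Monotone g :=
        monotone_nat_of_le_succ (fun k => by rw [hgs]; exact le_max_left _ _)
      have hglt : ∀ k, g k < oL := fun k => hltA _ (hgA k)
      have hstep : ∀ x : Ordinal, x < oL → ∃ a, a ∈ A ∧ x < a := by
        intro x hx
        by_contra h
        push_neg at h
        exact absurd (csSup_le hAne (fun a ha => (h a ha))) (not_le.mpr hx)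
      let nxt : Ordinal → Ordinal := fun x => if h : x < oL then (hstep x h).choose else 0
      have hnxt : ∀ x, x < oL → x < nxt x ∧ nxt x ∈ A := by
        intro x h
        have he' : nxt x = (hstep x h).choose := dif_pos h
        rw [he']
        exact ⟨(hstep x h).choose_spec.2, (hstep x h).choose_spec.1⟩
      let v : ℕ → Ordinal := fun k => Nat.rec (e 0) (fun k vk => nxt (max vk (g (k + 1)))) k
      have hvs : ∀ k, v (k + 1) = nxt (max (v k) (g (k + 1))) := fun _ => rfl
      have hvind : ∀ k, v k ∈ A := by
        intro k
        induction k with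
        | zero => exact heA 0
        | succ k ih =>
          have hw : max (v k) (g (k + 1)) < oL := max_lt (hltA _ ih) (hglt (k + 1))
          rw [hvs]
          exact (hnxt _ hw).2
      have hvlt : ∀ k, max (v k) (g (k + 1)) < v (k + 1) := by
        intro k
        have hw : max (v k) (g (k + 1)) < oL := max_lt (hltA _ (hvind k)) (hglt (k + 1))
        rw [hvs]
        exact (hnxt _ hw).1
      have hvmono : StrictMono v :=
        strictMono_nat_of_lt_succ (fun k => lt_of_le_of_lt (le_max_left _ _) (hvlt k))
      have hvbdd : BddAbove (Set.range v) :=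
        ⟨α, by rintro _ ⟨k, rfl⟩; exact le_trans (le_of_lt (hltA _ (hvind k))) hoLα⟩
      have hsupv : (⨆ k, v k) = oL := by
        apply le_antisymm
        · exact ciSup_le (fun k => le_of_lt (hltA _ (hvind k)))
        · apply csSup_le hAne
          intro a ha
          obtain ⟨k, hk⟩ := (he ▸ ha : a ∈ Set.range e)
          calc a = e k := hk.symm
            _ ≤ g k := hge k
            _ ≤ g (k + 1) := hgmono (Nat.le_succ k)
            _ ≤ v (k + 1) := le_of_lt (lt_of_le_of_lt (le_max_right _ _) (hvlt k))
            _ ≤ ⨆ k, v k := le_ciSup hvbdd (k + 1)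
      have hxk : ∀ k, ∃ x, x ∈ C ∧ x.val.1 = v k := by
        intro k
        obtain ⟨x, hxC, hx⟩ := hvind k
        exact ⟨x, hxC, hx⟩
      choose xs hxsC hxs using hxk
      have hord : ∀ k k', k ≤ k' → r (xs k) (xs k') := by
        intro k k' hk
        rcases eq_or_lt_of_le hk with rfl | hlt'
        · exact hrefl _
        · have hvv : (xs k).val.1 < (xs k').val.1 := by
            rw [hxs k, hxs k']; exact hvmono hlt'
          have hne : xs k ≠ xs k' := fun h => by rw [h] at hvv; exact lt_irrefl _ hvv
          rcases hC (hxsC k) (hxsC k') hne with h | h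
          · exact h
          · exact absurd h.1 (not_le.mpr hvv)
      obtain ⟨FL, hgoodL, hcohL⟩ := lim_lemma hUp v (fun k => (xs k).val.2)
        hvmono.monotone
        (fun k => by rw [← hxs k]; exact (xs k).2)
        (fun k k' hk γ hγ n => (hord k k' hk).2 γ (by rw [hxs k]; exact hγ) n)
      rw [hsupv] at hgoodL
      refine ⟨⟨(oL, FL), hgoodL⟩, ?_⟩
      intro y hy
      have hy1 : y.val.1 < oL := hltA _ ⟨y, hy, rfl⟩
      have hy2 : ∃ k, y.val.1 < v k := by
        refine Classical.byContradiction fun h => ?_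
        push_neg at h
        have := ciSup_le h
        rw [hsupv] at this
        exact absurd this (not_le.mpr hy1)
      obtain ⟨k, hk⟩ := hy2
      have h1 : r y (xs k) := by
        by_cases hne : y = xs k
        · rw [hne]; exact hrefl _
        · rcases hC hy (hxsC k) hne with h | h
          · exact h
          · exfalso
            have h3 : (xs k).val.1 ≤ y.val.1 := h.1
            rw [hxs k] at h3
            exact absurd hk (not_lt.mpr h3)
      have h2 : r (xs k) ⟨(oL, FL), hgoodL⟩ := by
        constructor
        · show (xs k).val.1 ≤ oL
          rw [hxs k]
          exact le_of_lt (hltA _ (hvind k))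
        · intro γ hγ n
          show FL γ n = (xs k).val.2 γ n
          apply hcohL k γ
          rw [← hxs k]
          exact hγ
      exact htrans h1 h2
  obtain ⟨m, hm⟩ := exists_maximal_of_chains_bounded hchain
    (fun {_ _ _} h1 h2 => htrans h1 h2)
  obtain ⟨c', F', hlt, hgood', hcoh'⟩ := ext_lemma hUp m.2
  have hmax := hm ⟨(c', F'), hgood'⟩ ⟨le_of_lt hlt, fun γ hγ n => hcoh' γ hγ n⟩
  exact absurd hmax.1 (not_le.mpr hlt)

end
end ZeroThmAux


/-- Zero Theorem for transfinite update procedures: every update procedure of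
countable ordinal `α ≥ 1` has a finite zero. -/
theorem zero_theorem_transfinite_update_procedure (α : Ordinal)
    (hα : 1 ≤ α) (hcount : α.card ≤ Cardinal.aleph0)
    (U : OSeq → Option (Ordinal × ℕ × ℕ)) (hU : IsUpdateProc α U) :
    ∃ f : OSeq, OFinite α f ∧ U f = none := by
  by_contra h
  push_neg at h
  exact ZeroThmAux.no_zero_false hU hcount h
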